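/- For every n ≥ 6, 150·q_{n,3} = 12n·F_{n−5} + 6n(n−5)·L_{n−4} + 5n(n²−9n+20)·F_{n−3}. -/
import Mathlib

open Polynomial

/-- The cube polynomials `Q n` of the matchable Lucas cubes. -/
noncomputable def Q : ℕ → Polynomial ℤ
  | 0 => 1
  | 1 => 2 + X
  | 2 => 3 + 2 * X
  | 3 => 4 + 3 * X
  | (n + 4) => Q (n + 3) + (1 + X) * Q (n + 2)

/-- `q n k` : the number of `k`-dimensional induced hypercubes of `Ω_n`,
i.e. the coefficient of `x^k` in `Q n`. -/
noncomputable def q (n k : ℕ) : ℤ := (Q n).coeff k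

/-- The Lucas numbers. -/
def L : ℕ → ℤ
  | 0 => 2
  | 1 => 1
  | (n + 2) => L (n + 1) + L n

/-- The Fibonacci numbers. -/
def F : ℕ → ℤ
  | 0 => 0
  | 1 => 1
  | (n + 2) => F (n + 1) + F n

lemma F_add_two (n : ℕ) : F (n + 2) = F (n + 1) + F n := rfl

lemma L_eq : ∀ n : ℕ, L (n + 1) = F n + F (n + 2) := by
  intro n
  induction n using Nat.twoStepInduction with
  | zero => norm_num [L, F]
  | one => norm_num [L, F]
  | more n ih1 ih2 =>
      show L (n + 2) + L (n + 1) = _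
      rw [ih1, ih2, F_add_two (n + 2), F_add_two (n + 1), F_add_two n]
      ring

lemma hQ4 : Q 4 = 7 + 8 * X + 2 * X ^ 2 := by
  show (4 + 3 * X : Polynomial ℤ) + (1 + X) * (3 + 2 * X) = _; ring

lemma hQ5 : Q 5 = 11 + 15 * X + 5 * X ^ 2 := by
  show Q 4 + (1 + X) * (4 + 3 * X) = _; rw [hQ4]; ring

lemma hQ6 : Q 6 = 18 + 30 * X + 15 * X ^ 2 + 2 * X ^ 3 := by
  show Q 5 + (1 + X) * Q 4 = _; rw [hQ4, hQ5]; ring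

lemma hQ7 : Q 7 = 29 + 56 * X + 35 * X ^ 2 + 7 * X ^ 3 := by
  show Q 6 + (1 + X) * Q 5 = _; rw [hQ5, hQ6]; ring

lemma qrec0 (n : ℕ) : q (n + 4) 0 = q (n + 3) 0 + q (n + 2) 0 := by
  show (Q (n + 3) + (1 + X) * Q (n + 2)).coeff 0 = _
  rw [coeff_add, mul_coeff_zero]
  simp [q]

lemma qrecS (n k : ℕ) :
    q (n + 4) (k + 1) = q (n + 3) (k + 1) + q (n + 2) (k + 1) + q (n + 2) k := by
  show (Q (n + 3) + (1 + X) * Q (n + 2)).coeff (k + 1) = _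
  rw [add_mul, one_mul, coeff_add, coeff_add, coeff_X_mul]
  simp [q]
  ring

lemma qA : ∀ m : ℕ, q (m + 2) 0 = L (m + 2) := by
  intro m
  induction m using Nat.twoStepInduction with
  | zero => show (3 + 2 * X : Polynomial ℤ).coeff 0 = L 2; norm_num [L]
  | one => show (4 + 3 * X : Polynomial ℤ).coeff 0 = L 3; norm_num [L]
  | more m ih1 ih2 =>
      rw [show m + 2 + 2 = m + 4 from rfl, qrec0, ih1, ih2]
      show _ = L (m + 3) + L (m + 2)
      ring

lemma qB : ∀ m : ℕ, q (m + 2) 1 = ((m : ℤ) + 2) * F (m + 1) := by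
  intro m
  induction m using Nat.twoStepInduction with
  | zero => show (3 + 2 * X : Polynomial ℤ).coeff 1 = _; norm_num [F]
  | one => show (4 + 3 * X : Polynomial ℤ).coeff 1 = _; norm_num [F]
  | more m ih1 ih2 =>
      rw [show m + 2 + 2 = m + 4 from rfl, qrecS, ih1, ih2, qA m]
      simp only [L_eq, F_add_two]
      push_cast
      ring

lemma qC : ∀ m : ℕ, 10 * q (m + 4) 2
    = ((m : ℤ) + 4) * (3 * m + 5) * F (m + 2) - 2 * ((m : ℤ) + 4) * (m + 2) * F m := by
  intro m
  induction m using Nat.twoStepInduction with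
  | zero =>
      have h : q 4 2 = 2 := by simp [q, hQ4, coeff_X_pow, coeff_X]
      rw [h]; norm_num [F]
  | one =>
      have h : q 5 2 = 5 := by simp [q, hQ5, coeff_X_pow, coeff_X]
      rw [h]; norm_num [F]
  | more m ih1 ih2 =>
      have h := qrecS (m + 2) 1
      rw [show m + 2 + 4 = m + 6 from rfl, show m + 2 + 3 = m + 5 from rfl,
        show m + 2 + 2 = m + 4 from rfl] at h
      have key : 10 * q (m + 6) 2
          = 10 * q (m + 5) 2 + 10 * q (m + 4) 2 + 10 * q (m + 4) 1 := by
        rw [h]; ring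
      rw [show m + 2 + 4 = m + 6 from rfl, key, ih1, ih2,
        show m + 4 = m + 2 + 2 from rfl, qB (m + 2)]
      simp only [F_add_two]
      push_cast
      ring

lemma qD : ∀ m : ℕ, 150 * q (m + 6) 3
    = 12 * ((m : ℤ) + 6) * F (m + 1) + 6 * ((m : ℤ) + 6) * ((m : ℤ) + 1) * L (m + 2)
      + 5 * ((m : ℤ) + 6) * ((m : ℤ) + 1) * ((m : ℤ) + 2) * F (m + 3) := by
  intro m
  induction m using Nat.twoStepInduction with
  | zero =>
      have h : q 6 3 = 2 := by simp [q, hQ6, coeff_X_pow, coeff_X]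
      rw [h]; norm_num [F, L]
  | one =>
      have h : q 7 3 = 7 := by simp [q, hQ7, coeff_X_pow, coeff_X]
      rw [h]; norm_num [F, L]
  | more m ih1 ih2 =>
      have h := qrecS (m + 4) 2
      rw [show m + 4 + 4 = m + 8 from rfl, show m + 4 + 3 = m + 7 from rfl,
        show m + 4 + 2 = m + 6 from rfl] at h
      have key : 150 * q (m + 8) 3
          = 150 * q (m + 7) 3 + 150 * q (m + 6) 3 + 15 * (10 * q (m + 6) 2) := by
        rw [h]; ring
      have hc := qC (m + 2)
      rw [show m + 2 + 4 = m + 6 from rfl, show m + 2 + 2 = m + 4 from rfl] at hc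
      rw [show m + 2 + 6 = m + 8 from rfl, key, ih1, ih2, hc]
      simp only [L_eq, F_add_two]
      push_cast
      ring

theorem q_three (n : ℕ) (hn : 6 ≤ n) :
    150 * q n 3
      = 12 * (n : ℤ) * F (n - 5) + 6 * (n : ℤ) * ((n : ℤ) - 5) * L (n - 4)
        + 5 * (n : ℤ) * ((n : ℤ) ^ 2 - 9 * (n : ℤ) + 20) * F (n - 3) := by
  obtain ⟨m, rfl⟩ := Nat.exists_eq_add_of_le hn
  have h5 : 6 + m - 5 = m + 1 := by omega
  have h4 : 6 + m - 4 = m + 2 := by omega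
  have h3 : 6 + m - 3 = m + 3 := by omega
  rw [h5, h4, h3, show 6 + m = m + 6 from by omega, qD m]
  push_cast
  ring
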